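/- Let ε ∈ (0,1), L = ⌈log₂(2/ε)⌉, and let X be a random variable with values in [0,1] satisfying E[X] ≥ ε/2. Then there exists ℓ ∈ {1,…,L+1} such that Pr[X ≥ 2^{-ℓ}] ≥ 2^ℓ·ε/(8ℓ²). -/

import Mathlib

open MeasureTheory ProbabilityTheory

lemma half_step (k : ℕ) : (2:ℝ)^(-(k:ℤ)) = 2 * 2^(-((k+1:ℕ):ℤ)) := by
  have e : (-((k+1:ℕ):ℤ)) = -(k:ℤ) - 1 := by push_cast; ring
  rw [e, zpow_sub₀ (by norm_num : (2:ℝ) ≠ 0)]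
  field_simp

lemma geom_tail (m M : ℕ) (hm : m ≤ M) :
    ∑ ℓ ∈ Finset.Icc m M, (2:ℝ)^(-(ℓ:ℤ)) = 2^(1-(m:ℤ)) - 2^(-(M:ℤ)) := by
  have e2 : (2:ℝ)^(1-(m:ℤ)) = 2 * 2^(-(m:ℤ)) := by
    rw [zpow_sub₀ (by norm_num : (2:ℝ) ≠ 0)]
    field_simp
    rw [← zpow_add₀ (by norm_num : (2:ℝ) ≠ 0), add_neg_cancel, zpow_zero]
  induction M, hm using Nat.le_induction with
  | base => rw [e2]; simp; ring
  | succ n hn ih =>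
    rw [Finset.sum_Icc_succ_top (by omega), ih, half_step n]
    push_cast
    ring

lemma pointwise (M : ℕ) (hM : 1 ≤ M) (x : ℝ) (hx1 : x ≤ 1) :
    x ≤ 2^(-(M:ℤ)) +
      ∑ ℓ ∈ Finset.Icc 1 M, (2:ℝ)^(-(ℓ:ℤ)) * (if (2:ℝ)^(-(ℓ:ℤ)) ≤ x then 1 else 0) := by
  have hnonneg : ∀ ℓ ∈ Finset.Icc 1 M,
      0 ≤ (2:ℝ)^(-(ℓ:ℤ)) * (if (2:ℝ)^(-(ℓ:ℤ)) ≤ x then 1 else 0) := by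
    intro ℓ _; positivity
  by_cases hc : (2:ℝ)^(-(M:ℤ)) ≤ x
  · have hex : ∃ ℓ : ℕ, (2:ℝ)^(-(ℓ:ℤ)) ≤ x := ⟨M, hc⟩
    set ℓ₀ := Nat.find hex with hℓ₀
    have hspec : (2:ℝ)^(-(ℓ₀:ℤ)) ≤ x := Nat.find_spec hex
    set m := max ℓ₀ 1 with hm
    have hmM : m ≤ M := max_le (Nat.find_min' hex hc) hM
    have hkey : ∀ ℓ ∈ Finset.Icc m M, (2:ℝ)^(-(ℓ:ℤ)) ≤ x := by
      intro ℓ hℓ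
      simp only [Finset.mem_Icc] at hℓ
      refine le_trans ?_ hspec
      apply zpow_le_zpow_right₀ (by norm_num)
      have : ℓ₀ ≤ ℓ := le_trans (le_max_left _ _) hℓ.1
      omega
    have hsub : ∑ ℓ ∈ Finset.Icc m M, (2:ℝ)^(-(ℓ:ℤ)) ≤
        ∑ ℓ ∈ Finset.Icc 1 M, (2:ℝ)^(-(ℓ:ℤ)) * (if (2:ℝ)^(-(ℓ:ℤ)) ≤ x then 1 else 0) := by
      rw [show (∑ ℓ ∈ Finset.Icc m M, (2:ℝ)^(-(ℓ:ℤ))) =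
          ∑ ℓ ∈ Finset.Icc m M, (2:ℝ)^(-(ℓ:ℤ)) * (if (2:ℝ)^(-(ℓ:ℤ)) ≤ x then 1 else 0) from
        Finset.sum_congr rfl (fun ℓ hℓ => by rw [if_pos (hkey ℓ hℓ)]; ring)]
      apply Finset.sum_le_sum_of_subset_of_nonneg
      · exact Finset.Icc_subset_Icc_left (le_max_right _ _)
      · intro ℓ _ _; positivity
    have hxm : x ≤ 2^(1-(m:ℤ)) := by
      rcases le_or_gt ℓ₀ 1 with h1 | h1
      · have hm1 : m = 1 := by omega
        rw [hm1]
        simpa using hx1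
      · have hm' : m = ℓ₀ := by omega
        have hmin := Nat.find_min hex (m := ℓ₀ - 1) (by omega)
        push_neg at hmin
        have e : (-(((ℓ₀-1 : ℕ)):ℤ)) = 1 - (ℓ₀:ℤ) := by
          push_cast [Nat.cast_sub (by omega : 1 ≤ ℓ₀)]; ring
        rw [e] at hmin
        rw [hm']
        exact hmin.le
    calc x ≤ 2^(1-(m:ℤ)) := hxm
    _ = 2^(-(M:ℤ)) + (2^(1-(m:ℤ)) - 2^(-(M:ℤ))) := by ring
    _ ≤ _ := by
        gcongr
        rw [← geom_tail m M hmM]; exact hsub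
  · push_neg at hc
    have := Finset.sum_nonneg hnonneg
    linarith

lemma sum_inv_sq (N : ℕ) (h : 1 ≤ N) :
    ∑ ℓ ∈ Finset.Icc 1 N, (1:ℝ)/(ℓ:ℝ)^2 ≤ 2 - 1/N := by
  induction N with
  | zero => omega
  | succ n ih =>
    rcases Nat.eq_or_lt_of_le h with h1 | h1
    · simp [← h1]; norm_num
    · have hn : 1 ≤ n := by omega
      have hn' : (1:ℝ) ≤ (n:ℝ) := by exact_mod_cast hn
      rw [Finset.sum_Icc_succ_top (by omega)]
      have h2 : (1:ℝ)/((n:ℝ)+1)^2 ≤ 1/n - 1/(n+1) := by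
        rw [div_sub_div _ _ (by positivity) (by positivity), one_mul, mul_one,
          add_sub_cancel_left]
        rw [div_le_div_iff₀ (by positivity) (by positivity)]
        nlinarith
      push_cast
      have := ih hn
      linarith

/-- Levin's work investment strategy: if a `[0,1]`-valued random variable has
mean at least `ε/2`, then for some level `ℓ ∈ {1, …, L+1}` with
`L = ⌈log₂(2/ε)⌉`, we have `Pr[X ≥ 2^{-ℓ}] ≥ 2^ℓ ε / (8ℓ²)`. -/
theorem stmt_15 {Ω : Type*} [MeasureSpace Ω] [IsProbabilityMeasure (ℙ : Measure Ω)]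
    (ε : ℝ) (hε : 0 < ε) (hε1 : ε < 1)
    (L : ℕ) (hL : L = ⌈Real.logb 2 (2/ε)⌉₊)
    (X : Ω → ℝ) (hX : Measurable X) (hrange : ∀ ω, X ω ∈ Set.Icc (0:ℝ) 1)
    (hmean : ε/2 ≤ ∫ ω, X ω) :
    ∃ ℓ : ℕ, 1 ≤ ℓ ∧ ℓ ≤ L + 1 ∧
      ENNReal.ofReal (2^ℓ * ε / (8 * (ℓ:ℝ)^2)) ≤ ℙ {ω | (2:ℝ)^(-(ℓ:ℤ)) ≤ X ω} := by
  by_contra hcon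
  push_neg at hcon
  set A : ℕ → Set Ω := fun ℓ => {ω | (2:ℝ)^(-(ℓ:ℤ)) ≤ X ω} with hA
  have hAm : ∀ ℓ, MeasurableSet (A ℓ) := fun ℓ => measurableSet_le measurable_const hX
  -- probabilities
  set p : ℕ → ℝ := fun ℓ => (ℙ (A ℓ)).toReal with hp
  have hplt : ∀ ℓ ∈ Finset.Icc 1 (L+1), p ℓ ≤ 2^ℓ * ε / (8 * (ℓ:ℝ)^2) := by
    intro ℓ hℓ
    simp only [Finset.mem_Icc] at hℓ
    exact (ENNReal.toReal_lt_of_lt_ofReal (hcon ℓ hℓ.1 hℓ.2)).le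
  -- integrability of X
  have hXint : Integrable X ℙ := by
    apply (integrable_const (1:ℝ)).mono' hX.aestronglyMeasurable
    filter_upwards with ω
    rw [Real.norm_eq_abs, abs_of_nonneg (hrange ω).1]
    exact (hrange ω).2
  -- the dominating simple function
  set g : Ω → ℝ := fun ω => 2^(-((L+1:ℕ):ℤ)) +
      ∑ ℓ ∈ Finset.Icc 1 (L+1), Set.indicator (A ℓ) (fun _ => (2:ℝ)^(-(ℓ:ℤ))) ω with hg
  have hgint : Integrable g ℙ := by
    apply (integrable_const _).add
    exact integrable_finset_sum _ fun ℓ _ => (integrable_const _).indicator (hAm ℓ)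
  have hle : ∀ ω, X ω ≤ g ω := by
    intro ω
    have := pointwise (L+1) (by omega) (X ω) (hrange ω).2
    simp only [hg, Set.indicator_apply, hA, Set.mem_setOf_eq, mul_ite, mul_one, mul_zero] at *
    convert this using 2
  have hint_le : ∫ ω, X ω ≤ ∫ ω, g ω := integral_mono hXint hgint hle
  have hgval : ∫ ω, g ω = 2^(-((L+1:ℕ):ℤ)) +
      ∑ ℓ ∈ Finset.Icc 1 (L+1), (2:ℝ)^(-(ℓ:ℤ)) * p ℓ := by
    rw [hg, integral_add (integrable_const _)
      (integrable_finset_sum _ fun ℓ _ => (integrable_const _).indicator (hAm ℓ)),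
      integral_const, integral_finset_sum _ fun ℓ _ => (integrable_const _).indicator (hAm ℓ)]
    simp only [measureReal_def, measure_univ, ENNReal.toReal_one, smul_eq_mul, one_mul]
    congr 1
    refine Finset.sum_congr rfl fun ℓ _ => ?_
    rw [integral_indicator_const _ (hAm ℓ), measureReal_def, smul_eq_mul]
    ring
  -- bound on the constant term
  have h2L : 2/ε ≤ (2:ℝ)^(L:ℕ) := by
    have h1 : Real.logb 2 (2/ε) ≤ (L:ℝ) := by rw [hL]; exact Nat.le_ceil _
    have h2 : (2:ℝ)^(Real.logb 2 (2/ε)) ≤ (2:ℝ)^((L:ℕ):ℝ) := by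
      apply Real.rpow_le_rpow_of_exponent_le (by norm_num) h1
    rwa [Real.rpow_logb (by norm_num) (by norm_num) (by positivity),
      Real.rpow_natCast] at h2
  have hconst : (2:ℝ)^(-((L+1:ℕ):ℤ)) ≤ ε/4 := by
    have e : (2:ℝ)^(-((L+1:ℕ):ℤ)) = 1/(2*2^(L:ℕ)) := by
      rw [zpow_neg, zpow_natCast, pow_succ]
      ring
    rw [e]
    have h1 : (0:ℝ) < 2*(2/ε) := by positivity
    have h2 : 2*(2/ε) ≤ 2*2^(L:ℕ) := by linarith
    calc (1:ℝ)/(2*2^(L:ℕ)) ≤ 1/(2*(2/ε)) := one_div_le_one_div_of_le h1 h2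
    _ = ε/4 := by
        rw [show (2:ℝ)*(2/ε) = 4/ε by ring, one_div_div]
  -- bound on the sum
  have hsum : ∑ ℓ ∈ Finset.Icc 1 (L+1), (2:ℝ)^(-(ℓ:ℤ)) * p ℓ ≤
      (ε/8) * (2 - 1/((L:ℝ)+1)) := by
    calc ∑ ℓ ∈ Finset.Icc 1 (L+1), (2:ℝ)^(-(ℓ:ℤ)) * p ℓ
        ≤ ∑ ℓ ∈ Finset.Icc 1 (L+1), (ε/8) * (1/(ℓ:ℝ)^2) := by
          apply Finset.sum_le_sum
          intro ℓ hℓ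
          simp only [Finset.mem_Icc] at hℓ
          have h2 : (0:ℝ) < (ℓ:ℝ) := by exact_mod_cast hℓ.1
          have := hplt ℓ (by simp [Finset.mem_Icc]; omega)
          have hpos : (0:ℝ) < (2:ℝ)^(-(ℓ:ℤ)) := by positivity
          calc (2:ℝ)^(-(ℓ:ℤ)) * p ℓ ≤ (2:ℝ)^(-(ℓ:ℤ)) * (2^ℓ * ε / (8 * (ℓ:ℝ)^2)) := by
                apply mul_le_mul_of_nonneg_left this hpos.le
          _ = (ε/8) * (1/(ℓ:ℝ)^2) := by
              rw [zpow_neg, zpow_natCast]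
              field_simp
    _ = (ε/8) * ∑ ℓ ∈ Finset.Icc 1 (L+1), (1:ℝ)/(ℓ:ℝ)^2 := by
          rw [Finset.mul_sum]
    _ ≤ (ε/8) * (2 - 1/((L:ℝ)+1)) := by
          have := sum_inv_sq (L+1) (by omega)
          push_cast at this ⊢
          have h8 : (0:ℝ) ≤ ε/8 := by positivity
          exact mul_le_mul_of_nonneg_left this h8
  have hLpos : (0:ℝ) < 1/((L:ℝ)+1) := by positivity
  rw [hgval] at hint_le
  nlinarith [mul_pos hε hLpos]
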